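/- Let 0 < a ≤ b be natural numbers and let d = a + b. Then the monomial x₀^a x₁^b in ℝ[x₀,x₁] admits a real Waring expansion with d summands: there exist signs α₁,…,α_d ∈ {1, −1} and pairwise linearly independent linear forms L₁,…,L_d ∈ ℝ[x₀,x₁] such that x₀^a x₁^b = ∑_{i=1}^{d} α_i · L_i^d. -/

import Mathlib

open Polynomial Finset

namespace WaringAux


/-- Coefficients of parity opposite to `n` vanish; those of the same parity
(up to degree `n`) are nonzero with alternating signs. -/
def Good (P : ℝ[X]) (n : ℕ) : Prop :=
  P.natDegree ≤ n ∧
  (∀ k, k ≤ n → (n + k) % 2 = 0 → 0 < (-1 : ℝ) ^ ((n - k) / 2) * P.coeff k) ∧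
  (∀ k, (n + k) % 2 = 1 → P.coeff k = 0)

lemma good_one : Good 1 0 := by
  refine ⟨by simp, ?_, ?_⟩
  · intro k hk _; interval_cases k; simp
  · intro k hk
    have : k ≠ 0 := by omega
    simp [coeff_one, this]

lemma good_step {P : ℝ[X]} {n : ℕ} {c : ℝ} (hc : 0 < c) (h : Good P n) :
    Good ((X ^ 2 - C c) * P) (n + 2) := by
  obtain ⟨hdeg, hpos, hzero⟩ := h
  have hco : ∀ k, ((X ^ 2 - C c) * P).coeff k
      = (if 2 ≤ k then P.coeff (k - 2) else 0) - c * P.coeff k := by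
    intro k
    rw [show (X ^ 2 - C c) * P = P * X ^ 2 - C c * P by ring, coeff_sub,
      coeff_mul_X_pow', coeff_C_mul]
  refine ⟨?_, ?_, ?_⟩
  · refine (natDegree_mul_le).trans ?_
    have h1 : (X ^ 2 - C c : ℝ[X]).natDegree ≤ 2 :=
      (natDegree_sub_le _ _).trans (by simp)
    omega
  · intro k hk hpar
    rw [hco]
    by_cases h2 : 2 ≤ k
    · rw [if_pos h2]
      have hk' : k ≤ n ∨ k = n + 2 := by omega
      rcases hk' with hk' | rfl
      · have e1 : (n + 2 - k) / 2 = (n - k) / 2 + 1 := by omega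
        have e2 : (n - (k - 2)) / 2 = (n - k) / 2 + 1 := by omega
        have h1 := hpos (k - 2) (by omega) (by omega)
        have h2' := hpos k (by omega) (by omega)
        rw [e2] at h1
        rw [e1]
        rw [pow_succ] at h1 ⊢
        nlinarith [mul_pos hc h2']
      · have hz : P.coeff (n + 2) = 0 := coeff_eq_zero_of_natDegree_lt (by omega)
        have h1 := hpos n le_rfl (by omega)
        have e : n + 2 - 2 = n := by omega
        rw [hz, e]
        simpa using h1
    · rw [if_neg h2]
      have hk' : k ≤ n := by omega
      have e1 : (n + 2 - k) / 2 = (n - k) / 2 + 1 := by omega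
      have h2' := hpos k hk' (by omega)
      rw [e1, pow_succ]
      nlinarith [mul_pos hc h2']
  · intro k hpar
    rw [hco]
    have hz1 : P.coeff k = 0 := hzero k (by omega)
    by_cases h2 : 2 ≤ k
    · rw [if_pos h2, hzero (k - 2) (by omega), hz1]; ring
    · rw [if_neg h2, hz1]; ring

/-- a finset is symmetric and omits `0`. -/
def Sym (s : Finset ℝ) : Prop := (0 : ℝ) ∉ s ∧ ∀ x ∈ s, -x ∈ s

lemma sym_erase_pair {s : Finset ℝ} (hs : Sym s) {u : ℝ} (hu : u ∈ s) :
    Sym ((s.erase u).erase (-u)) := by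
  obtain ⟨h0, hsym⟩ := hs
  constructor
  · intro h
    exact h0 (Finset.mem_of_mem_erase (Finset.mem_of_mem_erase h))
  · intro x hx
    have hxu : x ≠ -u := (Finset.mem_erase.mp hx).1
    have hxu' : x ≠ u := (Finset.mem_erase.mp (Finset.mem_of_mem_erase hx)).1
    have hxs : x ∈ s := Finset.mem_of_mem_erase (Finset.mem_of_mem_erase hx)
    refine Finset.mem_erase.mpr ⟨?_, Finset.mem_erase.mpr ⟨?_, hsym x hxs⟩⟩
    · intro h; exact hxu' (by linarith [neg_eq_iff_eq_neg.mp h, (neg_injective (by linarith : -x = -u) : x = u)])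
    · intro h; exact hxu (by linarith [neg_eq_iff_eq_neg.mp h])

lemma prod_decomp {s : Finset ℝ} (hs : Sym s) {u : ℝ} (hu : u ∈ s) :
    ∏ i ∈ s, (X - C i) =
      (X ^ 2 - C (u ^ 2)) * ∏ i ∈ (s.erase u).erase (-u), (X - C i) := by
  have hu0 : u ≠ 0 := fun h => hs.1 (h ▸ hu)
  have hnu : -u ∈ s.erase u := Finset.mem_erase.mpr ⟨by
    intro h; exact hu0 (by linarith), hs.2 u hu⟩
  rw [← Finset.mul_prod_erase _ _ hu, ← Finset.mul_prod_erase _ _ hnu, ← mul_assoc]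
  congr 1
  rw [map_neg]
  have : (C (u ^ 2) : ℝ[X]) = C u ^ 2 := by rw [map_pow]
  rw [this]; ring

lemma good_symm : ∀ (n : ℕ) (s : Finset ℝ), s.card = n → Sym s →
    Good (∏ i ∈ s, (X - C i)) n := by
  intro n
  induction n using Nat.strong_induction_on with
  | _ n ih =>
    intro s hcard hs
    rcases s.eq_empty_or_nonempty with rfl | ⟨u, hu⟩
    · simp only [Finset.card_empty] at hcard
      subst hcard
      simpa using good_one
    · have hu0 : u ≠ 0 := fun h => hs.1 (h ▸ hu)
      have hnu : -u ∈ s.erase u := Finset.mem_erase.mpr ⟨by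
        intro h; exact hu0 (by linarith), hs.2 u hu⟩
      have hcard2 : 2 ≤ n := by
        have h1 : 1 ≤ (s.erase u).card := Finset.card_pos.mpr ⟨-u, hnu⟩
        have h2 : (s.erase u).card = s.card - 1 := Finset.card_erase_of_mem hu
        omega
      have hcard' : ((s.erase u).erase (-u)).card = n - 2 := by
        rw [Finset.card_erase_of_mem hnu, Finset.card_erase_of_mem hu]
        omega
      have hgood := ih (n - 2) (by omega) _ hcard' (sym_erase_pair hs hu)
      have hc : 0 < u ^ 2 := lt_of_le_of_ne (sq_nonneg u) (Ne.symm (pow_ne_zero 2 hu0))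
      have := good_step hc hgood
      rw [prod_decomp hs hu]
      have e : n - 2 + 2 = n := by omega
      rwa [e] at this

lemma coeff_ne_zero_of_good {P : ℝ[X]} {n k : ℕ} (h : Good P n) (hk : k ≤ n)
    (hpar : (n + k) % 2 = 0) : P.coeff k ≠ 0 := by
  intro h0
  have := h.2.1 k hk hpar
  rw [h0] at this; simp at this

/-- coefficient of the erased product: nonzero at indices of parity opposite to `s.card`. -/
lemma coeff_erase_ne_zero {s : Finset ℝ} (hs : Sym s) {u : ℝ} (hu : u ∈ s) {k : ℕ}
    (hk1 : 1 ≤ k) (hk2 : k ≤ s.card - 1) (hpar : (s.card + k) % 2 = 1) :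
    (∏ i ∈ s.erase u, (X - C i)).coeff k ≠ 0 := by
  have hu0 : u ≠ 0 := fun h => hs.1 (h ▸ hu)
  have hnu : -u ∈ s.erase u := Finset.mem_erase.mpr ⟨by
    intro h; exact hu0 (by linarith), hs.2 u hu⟩
  have hcard2 : 2 ≤ s.card := by
    have h1 : 1 ≤ (s.erase u).card := Finset.card_pos.mpr ⟨-u, hnu⟩
    have h2 : (s.erase u).card = s.card - 1 := Finset.card_erase_of_mem hu
    omega
  have hcard' : ((s.erase u).erase (-u)).card = s.card - 2 := by
    rw [Finset.card_erase_of_mem hnu, Finset.card_erase_of_mem hu]; omega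
  set R := ∏ i ∈ (s.erase u).erase (-u), (X - C i) with hR
  have hgood : Good R (s.card - 2) := good_symm _ _ hcard' (sym_erase_pair hs hu)
  have hdec : ∏ i ∈ s.erase u, (X - C i) = (X + C u) * R := by
    rw [← Finset.mul_prod_erase _ _ hnu, map_neg, hR]; ring_nf
  have hco : ((X + C u) * R).coeff k = R.coeff (k - 1) + u * R.coeff k := by
    rw [add_mul, coeff_add, coeff_C_mul]
    congr 1
    obtain ⟨k', rfl⟩ : ∃ k', k = k' + 1 := ⟨k - 1, by omega⟩
    rw [coeff_X_mul]
    simp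
  rw [hdec, hco]
  have hz : R.coeff k = 0 := hgood.2.2 k (by omega)
  have hnz : R.coeff (k - 1) ≠ 0 :=
    coeff_ne_zero_of_good hgood (by omega) (by omega)
  rw [hz]
  simpa using hnz

/-- `{±1, ±2, …, ±m}` as a finset of reals. -/
noncomputable def symSet (m : ℕ) : Finset ℝ :=
  ((Finset.Icc (-(m : ℤ)) (m : ℤ)).erase 0).image (fun k : ℤ => (k : ℝ))

lemma sym_symSet (m : ℕ) : Sym (symSet m) := by
  constructor
  · intro h
    obtain ⟨k, hk, hk0⟩ := Finset.mem_image.mp h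
    have : k ≠ 0 := (Finset.mem_erase.mp hk).1
    exact this (by exact_mod_cast hk0)
  · intro x hx
    obtain ⟨k, hk, rfl⟩ := Finset.mem_image.mp hx
    refine Finset.mem_image.mpr ⟨-k, ?_, by push_cast; ring⟩
    have h1 := Finset.mem_erase.mp hk
    have h2 := Finset.mem_Icc.mp h1.2
    exact Finset.mem_erase.mpr ⟨by omega, Finset.mem_Icc.mpr (by omega)⟩

lemma card_symSet (m : ℕ) : (symSet m).card = 2 * m := by
  rw [symSet, Finset.card_image_of_injective _ (fun x y h => by exact_mod_cast h)]
  rw [Finset.card_erase_of_mem (Finset.mem_Icc.mpr (by omega)), Int.card_Icc]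
  omega

/-- Extract a coefficient via Lagrange interpolation. -/
lemma coeff_eq_sum (s : Finset ℝ) (f : ℝ[X]) (hf : f.degree < s.card) (b : ℕ) :
    f.coeff b = ∑ i ∈ s, f.eval i * (Lagrange.basis s id i).coeff b := by
  have h := Lagrange.eq_interpolate (v := id) (s := s) (Set.injOn_id _) hf
  conv_lhs => rw [h]
  rw [Lagrange.interpolate_apply, finset_sum_coeff]
  exact Finset.sum_congr rfl fun i _ => by rw [coeff_C_mul]; rfl

lemma basis_coeff (s : Finset ℝ) (i : ℝ) (b : ℕ) :
    (Lagrange.basis s id i).coeff b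
      = (∏ j ∈ s.erase i, (i - j)⁻¹) * (∏ j ∈ s.erase i, (X - C j)).coeff b := by
  rw [Lagrange.basis]
  simp only [Lagrange.basisDivisor, id]
  rw [Finset.prod_mul_distrib, ← map_prod, coeff_C_mul]

lemma basis_coeff_ne_zero {s : Finset ℝ} {i : ℝ} (hi : i ∈ s) {b : ℕ}
    (h : (∏ j ∈ s.erase i, (X - C j)).coeff b ≠ 0) :
    (Lagrange.basis s id i).coeff b ≠ 0 := by
  rw [basis_coeff]
  refine mul_ne_zero ?_ h
  rw [Finset.prod_ne_zero_iff]
  intro j hj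
  have := (Finset.mem_erase.mp hj).1
  exact inv_ne_zero (sub_ne_zero_of_ne (Ne.symm this))

lemma monic_nodePoly (s : Finset ℝ) : (∏ i ∈ s, (X - C i)).Monic :=
  monic_prod_of_monic _ _ fun i _ => monic_X_sub_C i

lemma natDegree_nodePoly (s : Finset ℝ) : (∏ i ∈ s, (X - C i)).natDegree = s.card := by
  rw [natDegree_prod _ _ fun i _ => X_sub_C_ne_zero i]
  simp

lemma eval_nodePoly {s : Finset ℝ} {t : ℝ} (ht : t ∈ s) :
    (∏ i ∈ s, (X - C i)).eval t = 0 := by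
  rw [eval_prod]
  exact Finset.prod_eq_zero ht (by simp)

/-- moments for `j < s.card`. -/
lemma moment_lt (s : Finset ℝ) (b j : ℕ) (hj : j < s.card) :
    ∑ t ∈ s, (Lagrange.basis s id t).coeff b * t ^ j
      = if j = b then 1 else 0 := by
  have hdeg : ((X : ℝ[X]) ^ j).degree < s.card := by
    rw [degree_X_pow]; exact_mod_cast hj
  have h := coeff_eq_sum s (X ^ j) hdeg b
  rw [coeff_X_pow] at h
  rw [show ∑ t ∈ s, (Lagrange.basis s id t).coeff b * t ^ j
      = ∑ t ∈ s, ((X : ℝ[X]) ^ j).eval t * (Lagrange.basis s id t).coeff b from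
    Finset.sum_congr rfl fun t _ => by rw [eval_pow, eval_X]; ring, ← h]
  by_cases hbj : j = b
  · subst hbj; simp
  · rw [if_neg hbj, if_neg fun h => hbj h.symm]

/-- top moment: `j = s.card`, assuming the relevant coefficient of the node
polynomial vanishes. -/
lemma moment_top (s : Finset ℝ) (b : ℕ) (hb : b < s.card)
    (hP : (∏ i ∈ s, (X - C i)).coeff b = 0) :
    ∑ t ∈ s, (Lagrange.basis s id t).coeff b * t ^ s.card = 0 := by
  set P := ∏ i ∈ s, (X - C i) with hPdef
  set f : ℝ[X] := X ^ s.card - P with hf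
  have hdeg : f.degree < s.card := by
    rw [degree_lt_iff_coeff_zero]
    intro m hm
    rw [coeff_sub, coeff_X_pow]
    rcases eq_or_lt_of_le hm with rfl | hm'
    · have h1 : P.coeff s.card = 1 := by
        have h2 := (monic_nodePoly s).coeff_natDegree
        rwa [natDegree_nodePoly s] at h2
      rw [if_pos rfl, h1]; ring
    · have h1 : P.coeff m = 0 := coeff_eq_zero_of_natDegree_lt (by
        rw [natDegree_nodePoly]; exact hm')
      rw [if_neg (by omega), h1]; ring
  have h := coeff_eq_sum s f hdeg b
  have hco : f.coeff b = 0 := by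
    rw [coeff_sub, coeff_X_pow, if_neg (by omega), hP, sub_zero]
  rw [hco] at h
  rw [show ∑ t ∈ s, (Lagrange.basis s id t).coeff b * t ^ s.card
      = ∑ t ∈ s, f.eval t * (Lagrange.basis s id t).coeff b from
    Finset.sum_congr rfl fun t ht => by
      rw [hf, eval_sub, eval_pow, eval_X, eval_nodePoly ht, sub_zero]; ring, ← h]


lemma coeff_X_mul' (P : ℝ[X]) (m : ℕ) :
    (X * P).coeff m = if 1 ≤ m then P.coeff (m - 1) else 0 := by
  by_cases hm : 1 ≤ m
  · rw [if_pos hm]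
    obtain ⟨m', rfl⟩ : ∃ m', m = m' + 1 := ⟨m - 1, by omega⟩
    rw [coeff_X_mul]; simp
  · have : m = 0 := by omega
    subst this
    simp [mul_coeff_zero]

/-- top moment at `s.card + 1` (used with an extra `y^d` summand). -/
lemma moment_top' (s : Finset ℝ) (b : ℕ) (hb1 : 1 ≤ b) (hb : b < s.card)
    (hP : (∏ i ∈ s, (X - C i)).coeff (s.card - 1) = 0) :
    ∑ t ∈ s, (Lagrange.basis s id t).coeff b * t ^ (s.card + 1)
      = -((∏ i ∈ s, (X - C i)).coeff (b - 1)) := by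
  set P := ∏ i ∈ s, (X - C i) with hPdef
  set f : ℝ[X] := X ^ (s.card + 1) - X * P with hf
  have hcard1 : 1 ≤ s.card := by omega
  have hdeg : f.degree < s.card := by
    rw [degree_lt_iff_coeff_zero]
    intro m hm
    rw [coeff_sub, coeff_X_pow, coeff_X_mul' P m, if_pos (show 1 ≤ m by omega)]
    rcases eq_or_lt_of_le hm with rfl | hm'
    · rw [if_neg (show ¬ (s.card = s.card + 1) by omega), hP]; ring
    · rcases eq_or_lt_of_le (show s.card + 1 ≤ m from hm') with h2 | hm''
      · have h1 : P.coeff s.card = 1 := by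
          have h3 := (monic_nodePoly s).coeff_natDegree
          rwa [natDegree_nodePoly s] at h3
        rw [if_pos h2.symm, show m - 1 = s.card by omega, h1]; ring
      · have h1 : P.coeff (m - 1) = 0 := coeff_eq_zero_of_natDegree_lt (by
          rw [natDegree_nodePoly]; omega)
        rw [if_neg (show ¬ (m = s.card + 1) by omega), h1]; ring
  have h := coeff_eq_sum s f hdeg b
  have hco : f.coeff b = -(P.coeff (b - 1)) := by
    rw [coeff_sub, coeff_X_pow, if_neg (show ¬ (b = s.card + 1) by omega),
      coeff_X_mul' P b, if_pos hb1]
    ring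
  rw [hco] at h
  rw [show ∑ t ∈ s, (Lagrange.basis s id t).coeff b * t ^ (s.card + 1)
      = ∑ t ∈ s, f.eval t * (Lagrange.basis s id t).coeff b from
    Finset.sum_congr rfl fun t ht => by
      rw [hf, eval_sub, eval_pow, eval_X, eval_mul, eval_X, eval_nodePoly ht,
        mul_zero, sub_zero]; ring, ← h]



lemma expand (s : Finset ℝ) (γ : ℝ → ℝ) (d : ℕ) :
    ∑ t ∈ s, (MvPolynomial.C (γ t) *
        (MvPolynomial.X 0 + MvPolynomial.C t * MvPolynomial.X 1) ^ d :
      MvPolynomial (Fin 2) ℝ)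
    = ∑ k ∈ Finset.range (d + 1),
        MvPolynomial.C ((d.choose k : ℝ) * ∑ t ∈ s, γ t * t ^ (d - k)) *
          (MvPolynomial.X 0 ^ k * MvPolynomial.X 1 ^ (d - k)) := by
  have h1 : ∀ t : ℝ,
      ((MvPolynomial.X 0 + MvPolynomial.C t * MvPolynomial.X 1) ^ d :
        MvPolynomial (Fin 2) ℝ)
      = ∑ k ∈ Finset.range (d + 1),
          MvPolynomial.C ((d.choose k : ℝ) * t ^ (d - k)) *
            (MvPolynomial.X 0 ^ k * MvPolynomial.X 1 ^ (d - k)) := by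
    intro t
    rw [add_pow]
    refine Finset.sum_congr rfl fun k hk => ?_
    rw [mul_pow, ← map_pow (MvPolynomial.C (σ := Fin 2) (R := ℝ)) t (d - k)]
    rw [show ((d.choose k : ℕ) : MvPolynomial (Fin 2) ℝ)
        = MvPolynomial.C ((d.choose k : ℕ) : ℝ) by push_cast; rfl]
    rw [map_mul]
    ring
  calc ∑ t ∈ s, (MvPolynomial.C (γ t) *
        (MvPolynomial.X 0 + MvPolynomial.C t * MvPolynomial.X 1) ^ d :
      MvPolynomial (Fin 2) ℝ)
      = ∑ t ∈ s, ∑ k ∈ Finset.range (d + 1),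
          MvPolynomial.C ((d.choose k : ℝ) * (γ t * t ^ (d - k))) *
            (MvPolynomial.X 0 ^ k * MvPolynomial.X 1 ^ (d - k)) := by
        refine Finset.sum_congr rfl fun t _ => ?_
        rw [h1 t, Finset.mul_sum]
        refine Finset.sum_congr rfl fun k _ => ?_
        rw [← mul_assoc, ← map_mul]
        ring_nf
    _ = _ := by
        rw [Finset.sum_comm]
        refine Finset.sum_congr rfl fun k _ => ?_
        rw [← Finset.sum_mul, ← map_sum, ← Finset.mul_sum]

open MvPolynomial in
lemma homog_aux (B p q : ℝ) :
    (MvPolynomial.C B * (MvPolynomial.C p * X 0 + MvPolynomial.C q * X 1) :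
      MvPolynomial (Fin 2) ℝ).IsHomogeneous 1 := by
  have h1 : (MvPolynomial.C (B * p) * X 0 : MvPolynomial (Fin 2) ℝ).IsHomogeneous 1 := by
    simpa using (isHomogeneous_C (Fin 2) (B * p)).mul (isHomogeneous_X ℝ 0)
  have h2 : (MvPolynomial.C (B * q) * X 1 : MvPolynomial (Fin 2) ℝ).IsHomogeneous 1 := by
    simpa using (isHomogeneous_C (Fin 2) (B * q)).mul (isHomogeneous_X ℝ 1)
  have h3 := h1.add h2
  have he : (MvPolynomial.C (B * p) * X 0 + MvPolynomial.C (B * q) * X 1 :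
      MvPolynomial (Fin 2) ℝ)
      = MvPolynomial.C B * (MvPolynomial.C p * X 0 + MvPolynomial.C q * X 1) := by
    rw [map_mul, map_mul]; ring
  rwa [he] at h3

def GoalD (d a b : ℕ) : Prop :=
  ∃ (α : Fin d → ℝ) (L : Fin d → MvPolynomial (Fin 2) ℝ),
    (∀ i, α i = 1 ∨ α i = -1) ∧
    (∀ i, (L i).IsHomogeneous 1) ∧
    (∀ i j, i ≠ j → ∀ c : ℝ, L i ≠ c • L j) ∧
    (MvPolynomial.X 0 ^ a * MvPolynomial.X 1 ^ b : MvPolynomial (Fin 2) ℝ)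
      = ∑ i, α i • L i ^ d

open MvPolynomial in
lemma packageD (d a b : ℕ) (hd : d = a + b) (ha : 0 < a) (hb : 0 < b)
    (v : Fin d → ℝ × ℝ) (γ : Fin d → ℝ)
    (hγ : ∀ i, γ i ≠ 0)
    (hdet : ∀ i j, i ≠ j → (v i).1 * (v j).2 ≠ (v i).2 * (v j).1)
    (hsum : (X 0 ^ a * X 1 ^ b : MvPolynomial (Fin 2) ℝ)
      = ∑ i, MvPolynomial.C (γ i) *
          (MvPolynomial.C (v i).1 * X 0 + MvPolynomial.C (v i).2 * X 1) ^ d) :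
    GoalD d a b := by
  subst hd
  have hd0 : a + b ≠ 0 := by omega
  have hβpos : ∀ i, 0 < |γ i| ^ (((a + b : ℕ) : ℝ))⁻¹ := fun i =>
    Real.rpow_pos_of_pos (abs_pos.mpr (hγ i)) _
  have hβpow : ∀ i, (|γ i| ^ (((a + b : ℕ) : ℝ))⁻¹) ^ (a + b) = |γ i| := fun i =>
    Real.rpow_inv_natCast_pow (abs_nonneg _) hd0
  refine ⟨fun i => if 0 ≤ γ i then 1 else -1,
    fun i => MvPolynomial.C (|γ i| ^ (((a + b : ℕ) : ℝ))⁻¹) *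
      (MvPolynomial.C (v i).1 * X 0 + MvPolynomial.C (v i).2 * X 1), ?_, ?_, ?_, ?_⟩
  · intro i; by_cases h : 0 ≤ γ i
    · left; simp [h]
    · right; simp [h]
  · intro i
    exact homog_aux _ _ _
  · intro i j hij c hc
    simp only at hc
    have hcoeff : ∀ (B p q : ℝ) (k : Fin 2),
        MvPolynomial.coeff (Finsupp.single k 1)
          (MvPolynomial.C B * (MvPolynomial.C p * X 0 + MvPolynomial.C q * X 1) :
            MvPolynomial (Fin 2) ℝ)
        = B * (p * (if (0 : Fin 2) = k then 1 else 0) + q * (if (1 : Fin 2) = k then 1 else 0)) := by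
      intro B p q k
      rw [MvPolynomial.coeff_C_mul, MvPolynomial.coeff_add, MvPolynomial.coeff_C_mul,
        MvPolynomial.coeff_C_mul, MvPolynomial.coeff_X', MvPolynomial.coeff_X']
      congr 3 <;> simp [Finsupp.single_eq_single_iff]
    have key : ∀ k : Fin 2,
        MvPolynomial.coeff (Finsupp.single k 1)
          (MvPolynomial.C (|γ i| ^ (((a + b : ℕ) : ℝ))⁻¹) *
            (MvPolynomial.C (v i).1 * X 0 + MvPolynomial.C (v i).2 * X 1))
        = c * MvPolynomial.coeff (Finsupp.single k 1)
            (MvPolynomial.C (|γ j| ^ (((a + b : ℕ) : ℝ))⁻¹) *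
              (MvPolynomial.C (v j).1 * X 0 + MvPolynomial.C (v j).2 * X 1)) := by
      intro k; rw [hc, MvPolynomial.smul_eq_C_mul, MvPolynomial.coeff_C_mul]
    have e0 := key 0
    have e1 := key 1
    rw [hcoeff, hcoeff] at e0 e1
    norm_num at e0 e1
    apply hdet i j hij
    have hbi := (hβpos i).ne'
    have hbj := (hβpos j).ne'
    push_cast at e0 e1 hbi hbj
    apply mul_left_cancel₀ hbi
    apply mul_left_cancel₀ hbj
    linear_combination (|γ j| ^ ((a : ℝ) + (b : ℝ))⁻¹ * (v j).2) * e0 -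
      (|γ j| ^ ((a : ℝ) + (b : ℝ))⁻¹ * (v j).1) * e1
  · rw [hsum]
    refine Finset.sum_congr rfl fun i _ => ?_
    rw [MvPolynomial.smul_eq_C_mul, mul_pow, ← map_pow, hβpow, ← mul_assoc, ← map_mul]
    congr 2
    by_cases h : 0 ≤ γ i
    · simp [h, abs_of_nonneg h]
    · simp [h, abs_of_neg (lt_of_not_ge h)]

lemma sum_eq_of_nodes (a b : ℕ) (ha : 0 < a) (hb : 0 < b) (s : Finset ℝ)
    (hcard : s.card = a + b)
    (hP : (∏ i ∈ s, (X - C i)).coeff b = 0) :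
    (MvPolynomial.X 0 ^ a * MvPolynomial.X 1 ^ b : MvPolynomial (Fin 2) ℝ)
      = ∑ t ∈ s, MvPolynomial.C ((((a+b).choose b : ℝ))⁻¹ * (Lagrange.basis s id t).coeff b) *
          (MvPolynomial.X 0 + MvPolynomial.C t * MvPolynomial.X 1) ^ (a + b) := by
  have hKne : (((a+b).choose b : ℝ)) ≠ 0 := by
    have h := Nat.choose_pos (show b ≤ a + b by omega)
    positivity
  have hMom : ∀ j, j ≤ a + b →
      ∑ t ∈ s, ((((a+b).choose b : ℝ))⁻¹ * (Lagrange.basis s id t).coeff b) * t ^ j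
      = if j = b then (((a+b).choose b : ℝ))⁻¹ else 0 := by
    intro j hj
    have h1 : ∑ t ∈ s, ((((a+b).choose b:ℝ))⁻¹ * (Lagrange.basis s id t).coeff b) * t ^ j
        = (((a+b).choose b:ℝ))⁻¹ * ∑ t ∈ s, (Lagrange.basis s id t).coeff b * t ^ j := by
      rw [Finset.mul_sum]; exact Finset.sum_congr rfl fun t _ => by ring
    rcases lt_or_eq_of_le hj with hj' | rfl
    · rw [h1, moment_lt s b j (by omega)]
      by_cases hjb : j = b
      · rw [if_pos hjb, if_pos hjb, mul_one]
      · rw [if_neg hjb, if_neg hjb, mul_zero]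
    · have h2 := moment_top s b (by omega) hP
      rw [hcard] at h2
      rw [h1, h2, if_neg (by omega), mul_zero]
  rw [expand s (fun t => (((a+b).choose b : ℝ))⁻¹ * (Lagrange.basis s id t).coeff b) (a+b)]
  have hcol : (∑ k ∈ Finset.range (a+b+1),
      MvPolynomial.C (((a+b).choose k : ℝ) *
        ∑ t ∈ s, ((((a+b).choose b : ℝ))⁻¹ * (Lagrange.basis s id t).coeff b) * t ^ (a+b-k)) *
      (MvPolynomial.X 0 ^ k * MvPolynomial.X 1 ^ (a+b-k)) : MvPolynomial (Fin 2) ℝ)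
      = MvPolynomial.C (((a+b).choose a : ℝ) *
        ∑ t ∈ s, ((((a+b).choose b : ℝ))⁻¹ * (Lagrange.basis s id t).coeff b) * t ^ (a+b-a)) *
      (MvPolynomial.X 0 ^ a * MvPolynomial.X 1 ^ (a+b-a)) := by
    refine Finset.sum_eq_single_of_mem a (Finset.mem_range.mpr (by omega)) fun k hk hka => ?_
    beta_reduce
    rw [hMom (a+b-k) (by omega), if_neg (by have := Finset.mem_range.mp hk; omega)]
    simp
  rw [hcol, show a + b - a = b by omega, hMom b (by omega), if_pos rfl]
  have e2 : ((a+b).choose a : ℝ) = ((a+b).choose b : ℝ) := by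
    norm_cast
    have h3 : (a+b).choose ((a+b) - b) = (a+b).choose b :=
      Nat.choose_symm (show b ≤ a + b by omega)
    rw [show a + b - b = a from by omega] at h3
    exact h3
  rw [e2, mul_inv_cancel₀ hKne]
  simp

open MvPolynomial in
lemma goal_of_nodes (a b : ℕ) (ha : 0 < a) (hb : 0 < b) (s : Finset ℝ)
    (hcard : s.card = a + b)
    (hP : (∏ i ∈ s, (Polynomial.X - Polynomial.C i)).coeff b = 0)
    (hQ : ∀ u ∈ s, (∏ i ∈ s.erase u, (Polynomial.X - Polynomial.C i)).coeff b ≠ 0) :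
    GoalD (a + b) a b := by
  have hsum := sum_eq_of_nodes a b ha hb s hcard hP
  set e := s.orderIsoOfFin hcard with he
  set w : Fin (a + b) → ℝ := fun i => (e i : ℝ) with hw
  have hwmem : ∀ i, w i ∈ s := fun i => (e i).2
  have hwinj : Function.Injective w := fun i j h => by
    have := Subtype.ext (p := fun x => x ∈ s) h
    exact e.injective this
  refine packageD (a+b) a b rfl ha hb (fun i => (1, w i))
    (fun i => (((a+b).choose b : ℝ))⁻¹ * (Lagrange.basis s id (w i)).coeff b) ?_ ?_ ?_
  · intro i
    have hKne : (((a+b).choose b : ℝ)) ≠ 0 := by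
      have h := Nat.choose_pos (show b ≤ a + b by omega)
      positivity
    exact mul_ne_zero (inv_ne_zero hKne)
      (basis_coeff_ne_zero (hwmem i) (hQ _ (hwmem i)))
  · intro i j hij
    simp only [one_mul, mul_one]
    intro hh
    exact hij (hwinj hh.symm)
  · rw [hsum]
    have h1 : ∀ F : ℝ → MvPolynomial (Fin 2) ℝ, ∑ t ∈ s, F t = ∑ i : Fin (a+b), F (w i) := by
      intro F
      rw [← Finset.sum_coe_sort s F]
      exact (Equiv.sum_comp e.toEquiv (fun x : {x // x ∈ s} => F x)).symm
    rw [h1]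
    refine Finset.sum_congr rfl fun i _ => ?_
    rw [map_one, one_mul]

lemma prod_insert_zero (t : Finset ℝ) (h : (0:ℝ) ∉ t) :
    ∏ i ∈ insert (0:ℝ) t, (X - C i) = X * ∏ i ∈ t, (X - C i) := by
  rw [Finset.prod_insert h]; simp

lemma nodes_a_odd (a b : ℕ) (ha : 0 < a) (hb : 0 < b) (haodd : a % 2 = 1) :
    ∃ s : Finset ℝ, s.card = a + b ∧
      (∏ i ∈ s, (X - C i)).coeff b = 0 ∧
      (∀ u ∈ s, (∏ i ∈ s.erase u, (X - C i)).coeff b ≠ 0) := by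
  by_cases hd : (a + b) % 2 = 0
  · -- d even
    have hcard : (symSet ((a+b)/2)).card = a + b := by rw [card_symSet]; omega
    refine ⟨symSet ((a+b)/2), hcard, ?_, ?_⟩
    · exact (good_symm (a+b) _ hcard (sym_symSet _)).2.2 b (by omega)
    · intro u hu
      exact coeff_erase_ne_zero (sym_symSet _) hu (by omega)
        (by rw [hcard]; omega) (by rw [hcard]; omega)
  · -- d odd, b even ≥ 2
    have hbe : b % 2 = 0 := by omega
    have hb2 : 2 ≤ b := by omega
    have h0t : (0:ℝ) ∉ symSet ((a+b-1)/2) := (sym_symSet _).1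
    have hct : (symSet ((a+b-1)/2)).card = a + b - 1 := by rw [card_symSet]; omega
    have hgt : Good (∏ i ∈ symSet ((a+b-1)/2), (X - C i)) (a+b-1) :=
      good_symm (a+b-1) _ hct (sym_symSet _)
    refine ⟨insert 0 (symSet ((a+b-1)/2)), ?_, ?_, ?_⟩
    · rw [Finset.card_insert_of_notMem h0t, hct]; omega
    · rw [prod_insert_zero _ h0t, coeff_X_mul' _ b, if_pos (by omega)]
      exact hgt.2.2 (b-1) (by omega)
    · intro u hu
      rcases Finset.mem_insert.mp hu with rfl | hut
      · rw [Finset.erase_insert h0t]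
        exact coeff_ne_zero_of_good hgt (by omega) (by omega)
      · have hu0 : u ≠ 0 := fun h => h0t (h ▸ hut)
        rw [Finset.erase_insert_of_ne (Ne.symm hu0)]
        have h0t' : (0:ℝ) ∉ (symSet ((a+b-1)/2)).erase u := fun h =>
          h0t (Finset.mem_of_mem_erase h)
        rw [prod_insert_zero _ h0t', coeff_X_mul' _ b, if_pos (by omega)]
        exact coeff_erase_ne_zero (sym_symSet _) hut (by omega)
          (by rw [hct]; omega) (by rw [hct]; omega)

lemma swapD (d a b : ℕ) (h : GoalD d b a) : GoalD d a b := by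
  obtain ⟨α, L, h1, h2, h3, h4⟩ := h
  refine ⟨α, fun i => MvPolynomial.rename (Equiv.swap (0 : Fin 2) 1) (L i), h1, ?_, ?_, ?_⟩
  · intro i
    exact (h2 i).rename_isHomogeneous
  · intro i j hij c hc
    apply h3 i j hij c
    have hinj := MvPolynomial.rename_injective (R := ℝ)
      (f := (Equiv.swap (0 : Fin 2) 1 : Fin 2 → Fin 2)) (Equiv.swap 0 1).injective
    apply hinj
    simp only at hc
    rw [hc]
    rw [MvPolynomial.smul_eq_C_mul, MvPolynomial.smul_eq_C_mul, map_mul,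
      MvPolynomial.rename_C]
  · have h5 := congrArg (MvPolynomial.rename (Equiv.swap (0 : Fin 2) 1)) h4
    rw [map_mul, map_pow, map_pow, MvPolynomial.rename_X, MvPolynomial.rename_X,
      Equiv.swap_apply_left, Equiv.swap_apply_right, map_sum] at h5
    rw [show ((MvPolynomial.X 1 : MvPolynomial (Fin 2) ℝ) ^ b * MvPolynomial.X 0 ^ a)
        = MvPolynomial.X 0 ^ a * MvPolynomial.X 1 ^ b from mul_comm _ _] at h5
    rw [h5]
    refine Finset.sum_congr rfl fun i _ => ?_
    rw [MvPolynomial.smul_eq_C_mul, MvPolynomial.smul_eq_C_mul, map_mul,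
      MvPolynomial.rename_C, map_pow]

lemma sum_eq_of_nodes_even (a b : ℕ) (ha : 2 ≤ a) (hb : 2 ≤ b) (s : Finset ℝ)
    (hcard : s.card = a + b - 1)
    (hP : (∏ i ∈ s, (X - C i)).coeff b = 0)
    (hP2 : (∏ i ∈ s, (X - C i)).coeff (a + b - 2) = 0) :
    (MvPolynomial.X 0 ^ a * MvPolynomial.X 1 ^ b : MvPolynomial (Fin 2) ℝ)
      = (∑ t ∈ s, MvPolynomial.C ((((a+b).choose b : ℝ))⁻¹ * (Lagrange.basis s id t).coeff b) *
          (MvPolynomial.X 0 + MvPolynomial.C t * MvPolynomial.X 1) ^ (a + b))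
        + MvPolynomial.C ((((a+b).choose b : ℝ))⁻¹ * (∏ i ∈ s, (X - C i)).coeff (b - 1)) *
            MvPolynomial.X 1 ^ (a + b) := by
  have hKne : (((a+b).choose b : ℝ)) ≠ 0 := by
    have h := Nat.choose_pos (show b ≤ a + b by omega)
    positivity
  have hble : b < s.card := by omega
  have hMom : ∀ j, j ≤ a + b →
      ∑ t ∈ s, ((((a+b).choose b : ℝ))⁻¹ * (Lagrange.basis s id t).coeff b) * t ^ j
      = (if j = b then (((a+b).choose b : ℝ))⁻¹ else 0)
        + (if j = a + b then -((((a+b).choose b : ℝ))⁻¹ * (∏ i ∈ s, (X - C i)).coeff (b - 1)) else 0) := by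
    intro j hj
    have h1 : ∑ t ∈ s, ((((a+b).choose b:ℝ))⁻¹ * (Lagrange.basis s id t).coeff b) * t ^ j
        = (((a+b).choose b:ℝ))⁻¹ * ∑ t ∈ s, (Lagrange.basis s id t).coeff b * t ^ j := by
      rw [Finset.mul_sum]; exact Finset.sum_congr rfl fun t _ => by ring
    rcases Nat.lt_or_ge j (a + b - 1) with hj1 | hj1
    · rw [h1, moment_lt s b j (by omega), if_neg (show ¬(j = a + b) by omega)]
      by_cases hjb : j = b
      · rw [if_pos hjb, if_pos hjb]; ring
      · rw [if_neg hjb, if_neg hjb]; ring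
    · rcases Nat.lt_or_ge j (a + b) with hj2 | hj2
      · have hjq : j = s.card := by omega
        subst hjq
        have h2 := moment_top s b hble hP
        rw [h1, h2, if_neg (show ¬(s.card = b) by omega),
          if_neg (show ¬(s.card = a + b) by omega)]
        ring
      · have hjq : j = s.card + 1 := by omega
        subst hjq
        have h2 := moment_top' s b (by omega) hble (by
          rw [show s.card - 1 = a + b - 2 by omega]; exact hP2)
        rw [h1, h2, if_neg (show ¬(s.card + 1 = b) by omega),
          if_pos (show s.card + 1 = a + b by omega)]
        ring
  rw [expand s (fun t => (((a+b).choose b : ℝ))⁻¹ * (Lagrange.basis s id t).coeff b) (a+b)]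
  have hsplit : ∀ k ∈ Finset.range (a+b+1),
      (MvPolynomial.C (((a+b).choose k : ℝ) *
        ∑ t ∈ s, ((((a+b).choose b : ℝ))⁻¹ * (Lagrange.basis s id t).coeff b) * t ^ (a+b-k)) *
      (MvPolynomial.X 0 ^ k * MvPolynomial.X 1 ^ (a+b-k)) : MvPolynomial (Fin 2) ℝ)
      = (MvPolynomial.C (((a+b).choose k : ℝ) *
          (if a+b-k = b then (((a+b).choose b : ℝ))⁻¹ else 0)) *
        (MvPolynomial.X 0 ^ k * MvPolynomial.X 1 ^ (a+b-k)))
        + (MvPolynomial.C (((a+b).choose k : ℝ) *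
          (if a+b-k = a+b then -((((a+b).choose b : ℝ))⁻¹ * (∏ i ∈ s, (X - C i)).coeff (b - 1)) else 0)) *
        (MvPolynomial.X 0 ^ k * MvPolynomial.X 1 ^ (a+b-k))) := by
    intro k hk
    rw [hMom (a+b-k) (by omega), mul_add, map_add, add_mul]
  rw [Finset.sum_congr rfl hsplit, Finset.sum_add_distrib]
  have hcol1 : (∑ k ∈ Finset.range (a+b+1),
      MvPolynomial.C (((a+b).choose k : ℝ) *
          (if a+b-k = b then (((a+b).choose b : ℝ))⁻¹ else 0)) *
        (MvPolynomial.X 0 ^ k * MvPolynomial.X 1 ^ (a+b-k)) : MvPolynomial (Fin 2) ℝ)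
      = MvPolynomial.C (((a+b).choose a : ℝ) *
          (if a+b-a = b then (((a+b).choose b : ℝ))⁻¹ else 0)) *
        (MvPolynomial.X 0 ^ a * MvPolynomial.X 1 ^ (a+b-a)) := by
    refine Finset.sum_eq_single_of_mem a (Finset.mem_range.mpr (by omega)) fun k hk hka => ?_
    beta_reduce
    rw [if_neg (show ¬(a+b-k = b) by have := Finset.mem_range.mp hk; omega)]
    simp
  have hcol2 : (∑ k ∈ Finset.range (a+b+1),
      MvPolynomial.C (((a+b).choose k : ℝ) *
          (if a+b-k = a+b then -((((a+b).choose b : ℝ))⁻¹ * (∏ i ∈ s, (X - C i)).coeff (b - 1)) else 0)) *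
        (MvPolynomial.X 0 ^ k * MvPolynomial.X 1 ^ (a+b-k)) : MvPolynomial (Fin 2) ℝ)
      = MvPolynomial.C (((a+b).choose 0 : ℝ) *
          (if a+b-0 = a+b then -((((a+b).choose b : ℝ))⁻¹ * (∏ i ∈ s, (X - C i)).coeff (b - 1)) else 0)) *
        (MvPolynomial.X 0 ^ 0 * MvPolynomial.X 1 ^ (a+b-0)) := by
    refine Finset.sum_eq_single_of_mem 0 (Finset.mem_range.mpr (by omega)) fun k hk hka => ?_
    beta_reduce
    rw [if_neg (show ¬(a+b-k = a+b) by have := Finset.mem_range.mp hk; omega)]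
    simp
  rw [hcol1, hcol2]
  rw [show a + b - a = b by omega, if_pos rfl, Nat.sub_zero, if_pos rfl]
  have e2 : ((a+b).choose a : ℝ) = ((a+b).choose b : ℝ) := by
    norm_cast
    have h3 : (a+b).choose ((a+b) - b) = (a+b).choose b :=
      Nat.choose_symm (show b ≤ a + b by omega)
    rw [show a + b - b = a from by omega] at h3
    exact h3
  rw [e2, mul_inv_cancel₀ hKne]
  simp only [Nat.choose_zero_right, Nat.cast_one, one_mul, map_one, map_neg, pow_zero]
  ring

lemma nodes_even (a b : ℕ) (ha : 2 ≤ a) (hb : 2 ≤ b) (hae : a % 2 = 0) (hbe : b % 2 = 0) :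
    ∃ s : Finset ℝ, s.card = a + b - 1 ∧
      (∏ i ∈ s, (X - C i)).coeff b = 0 ∧
      (∏ i ∈ s, (X - C i)).coeff (a + b - 2) = 0 ∧
      (∏ i ∈ s, (X - C i)).coeff (b - 1) ≠ 0 ∧
      (∀ u ∈ s, (∏ i ∈ s.erase u, (X - C i)).coeff b ≠ 0) := by
  have h0t : (0:ℝ) ∉ symSet ((a+b-2)/2) := (sym_symSet _).1
  have hct : (symSet ((a+b-2)/2)).card = a + b - 2 := by rw [card_symSet]; omega
  have hgt : Good (∏ i ∈ symSet ((a+b-2)/2), (X - C i)) (a+b-2) :=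
    good_symm (a+b-2) _ hct (sym_symSet _)
  refine ⟨insert 0 (symSet ((a+b-2)/2)), ?_, ?_, ?_, ?_, ?_⟩
  · rw [Finset.card_insert_of_notMem h0t, hct]; omega
  · rw [prod_insert_zero _ h0t, coeff_X_mul' _ b, if_pos (by omega)]
    exact hgt.2.2 (b-1) (by omega)
  · rw [prod_insert_zero _ h0t, coeff_X_mul' _ (a+b-2), if_pos (by omega)]
    exact hgt.2.2 (a+b-2-1) (by omega)
  · rw [prod_insert_zero _ h0t, coeff_X_mul' _ (b-1), if_pos (by omega)]
    exact coeff_ne_zero_of_good hgt (by omega) (by omega)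
  · intro u hu
    rcases Finset.mem_insert.mp hu with rfl | hut
    · rw [Finset.erase_insert h0t]
      exact coeff_ne_zero_of_good hgt (by omega) (by omega)
    · have hu0 : u ≠ 0 := fun h => h0t (h ▸ hut)
      rw [Finset.erase_insert_of_ne (Ne.symm hu0)]
      have h0t' : (0:ℝ) ∉ (symSet ((a+b-2)/2)).erase u := fun h =>
        h0t (Finset.mem_of_mem_erase h)
      rw [prod_insert_zero _ h0t', coeff_X_mul' _ b, if_pos (by omega)]
      exact coeff_erase_ne_zero (sym_symSet _) hut (by omega)
        (by rw [hct]; omega) (by rw [hct]; omega)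

lemma goal_even (a b : ℕ) (ha : 2 ≤ a) (hb : 2 ≤ b) (hae : a % 2 = 0) (hbe : b % 2 = 0) :
    GoalD (a + b) a b := by
  obtain ⟨s, hcard, hP, hP2, hκ, hQ⟩ := nodes_even a b ha hb hae hbe
  have hsum := sum_eq_of_nodes_even a b ha hb s hcard hP hP2
  have hKne : (((a+b).choose b : ℝ)) ≠ 0 := by
    have h := Nat.choose_pos (show b ≤ a + b by omega)
    positivity
  obtain ⟨n, hd⟩ : ∃ n, a + b = n + 1 := ⟨a + b - 1, by omega⟩
  rw [hd] at hsum hKne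
  have hcard' : s.card = n := by omega
  have hwinj : Function.Injective (fun i : Fin n => ((s.orderIsoOfFin hcard' i : ℝ))) :=
    fun i j h => (s.orderIsoOfFin hcard').injective (Subtype.ext h)
  refine hd ▸ packageD (n+1) a b hd.symm (by omega) (by omega)
    (Fin.snoc (fun i => ((1:ℝ), ((s.orderIsoOfFin hcard' i : ℝ)))) ((0:ℝ), (1:ℝ)))
    (Fin.snoc (fun i => (((n+1).choose b : ℝ))⁻¹ *
        (Lagrange.basis s id ((s.orderIsoOfFin hcard' i : ℝ))).coeff b)
      ((((n+1).choose b : ℝ))⁻¹ * (∏ i ∈ s, (X - C i)).coeff (b - 1)))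
    ?_ ?_ ?_
  · -- nonzero coefficients
    intro i
    refine Fin.lastCases ?_ (fun j => ?_) i
    · rw [Fin.snoc_last]
      exact mul_ne_zero (inv_ne_zero hKne) hκ
    · rw [Fin.snoc_castSucc]
      exact mul_ne_zero (inv_ne_zero hKne)
        (basis_coeff_ne_zero (s.orderIsoOfFin hcard' j).2
          (hQ _ (s.orderIsoOfFin hcard' j).2))
  · -- determinant condition
    intro i j
    refine Fin.lastCases ?_ (fun i' => ?_) i <;> refine Fin.lastCases ?_ (fun j' => ?_) j
    · intro hij; exact absurd rfl hij
    · intro _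
      simp only [Fin.snoc_last, Fin.snoc_castSucc]
      norm_num
    · intro _
      simp only [Fin.snoc_last, Fin.snoc_castSucc]
      norm_num
    · intro hij
      simp only [Fin.snoc_castSucc]
      rw [one_mul, mul_one]
      intro h
      exact hij (by rw [hwinj h.symm])
  · -- the sum identity
    rw [hsum, Fin.sum_univ_castSucc]
    simp only [Fin.snoc_castSucc, Fin.snoc_last]
    congr 1
    · have h1 : ∀ F : ℝ → MvPolynomial (Fin 2) ℝ,
          ∑ t ∈ s, F t = ∑ i : Fin n, F ((s.orderIsoOfFin hcard' i : ℝ)) := by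
        intro F
        rw [← Finset.sum_coe_sort s F]
        exact (Equiv.sum_comp (s.orderIsoOfFin hcard').toEquiv
          (fun x : {x // x ∈ s} => F x)).symm
      rw [h1]
      refine Finset.sum_congr rfl fun i _ => ?_
      rw [map_one, one_mul]
    · rw [map_zero, zero_mul, map_one, one_mul, zero_add]


end WaringAux

open MvPolynomial

/-- Any monomial `x₀^a x₁^b` with `0 < a ≤ b` in `ℝ[x₀,x₁]` admits a real Waring
expansion with `d = a + b` summands: signs `αᵢ ∈ {1, -1}` and pairwise linearly
independent real linear forms `Lᵢ` with `x₀^a x₁^b = ∑ αᵢ Lᵢ^d`. -/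
theorem monomial_real_waring_expansion (a b : ℕ) (ha : 0 < a) (hab : a ≤ b) :
    ∃ (α : Fin (a + b) → ℝ) (L : Fin (a + b) → MvPolynomial (Fin 2) ℝ),
      (∀ i, α i = 1 ∨ α i = -1) ∧
      (∀ i, (L i).IsHomogeneous 1) ∧
      (∀ i j, i ≠ j → ∀ c : ℝ, L i ≠ c • L j) ∧
      (X 0 ^ a * X 1 ^ b : MvPolynomial (Fin 2) ℝ) = ∑ i, α i • L i ^ (a + b) := by
  have hb : 0 < b := by omega
  have main : WaringAux.GoalD (a + b) a b := by
    by_cases hae : a % 2 = 1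
    · obtain ⟨s, hcard, hP, hQ⟩ := WaringAux.nodes_a_odd a b ha hb hae
      exact WaringAux.goal_of_nodes a b ha hb s hcard hP hQ
    · by_cases hbe : b % 2 = 1
      · have h : WaringAux.GoalD (b + a) b a := by
          obtain ⟨s, hcard, hP, hQ⟩ := WaringAux.nodes_a_odd b a hb ha hbe
          exact WaringAux.goal_of_nodes b a hb ha s hcard hP hQ
        have h' : WaringAux.GoalD (a + b) b a := (Nat.add_comm b a) ▸ h
        exact WaringAux.swapD (a + b) a b h'
      · exact WaringAux.goal_even a b (by omega) (by omega) (by omega) (by omega)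
  exact main
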